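/- Let λ > 0, let p : ℝ → ℝ be continuous, and let σ : ℝ → ℝ be integrable and continuous such that σ(x) = S[T[σ]](x) + p(x) for all x ∈ ℝ. Then δ := T[σ] is twice continuously differentiable and satisfies δ″(x) + 4λ²·δ(x) − (δ′(x))²/4 + 4λ²·(exp(δ(x)) − 1 − δ(x)) = p(x) for all x ∈ ℝ. -/

import Mathlib

open MeasureTheory Real

/-- The operator `T` defined by `T[f](x) = (1/(4λ)) ∫_ℝ sin(2λ|x − y|) f(y) dy`. -/
noncomputable def opT (lam : ℝ) (f : ℝ → ℝ) (x : ℝ) : ℝ :=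
  (1 / (4 * lam)) * ∫ y : ℝ, Real.sin (2 * lam * |x - y|) * f y

/-- The operator `S` defined by `S[f](x) = (f′(x))²/4 − 4λ²·(exp(f(x)) − 1 − f(x))`. -/
noncomputable def opS (lam : ℝ) (f : ℝ → ℝ) (x : ℝ) : ℝ :=
  (deriv f x) ^ 2 / 4 - 4 * lam ^ 2 * (Real.exp (f x) - 1 - f x)

open Set

noncomputable def Ac (lam : ℝ) (σ : ℝ → ℝ) (x : ℝ) : ℝ :=
  ∫ y in Iic x, Real.cos (2 * lam * y) * σ y

noncomputable def Bs (lam : ℝ) (σ : ℝ → ℝ) (x : ℝ) : ℝ :=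
  ∫ y in Iic x, Real.sin (2 * lam * y) * σ y

noncomputable def At (lam : ℝ) (σ : ℝ → ℝ) : ℝ := ∫ y : ℝ, Real.cos (2 * lam * y) * σ y
noncomputable def Bt (lam : ℝ) (σ : ℝ → ℝ) : ℝ := ∫ y : ℝ, Real.sin (2 * lam * y) * σ y

lemma aux_int {σ : ℝ → ℝ} (hσi : Integrable σ) (g : ℝ → ℝ) (hg : Continuous g)
    (hb : ∀ y, |g y| ≤ 1) : Integrable (fun y => g y * σ y) :=
  hσi.bdd_mul hg.aestronglyMeasurable (c := 1) (Filter.Eventually.of_forall fun y => by simpa using hb y)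

lemma int_gc {lam : ℝ} {σ : ℝ → ℝ} (hσi : Integrable σ) :
    Integrable (fun y => Real.cos (2 * lam * y) * σ y) :=
  aux_int hσi _ (Real.continuous_cos.comp (continuous_const.mul continuous_id))
    (fun y => Real.abs_cos_le_one _)

lemma int_gs {lam : ℝ} {σ : ℝ → ℝ} (hσi : Integrable σ) :
    Integrable (fun y => Real.sin (2 * lam * y) * σ y) :=
  aux_int hσi _ (Real.continuous_sin.comp (continuous_const.mul continuous_id))
    (fun y => Real.abs_sin_le_one _)

lemma T_eq {lam : ℝ} {σ : ℝ → ℝ} (hσi : Integrable σ) (x : ℝ) :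
    opT lam σ x = (1 / (4 * lam)) *
      (Real.sin (2 * lam * x) * (2 * Ac lam σ x - At lam σ) +
       Real.cos (2 * lam * x) * (Bt lam σ - 2 * Bs lam σ x)) := by
  have hker : Integrable (fun y => Real.sin (2 * lam * |x - y|) * σ y) := by
    refine aux_int hσi _ ?_ (fun y => Real.abs_sin_le_one _)
    exact Real.continuous_sin.comp (continuous_const.mul (continuous_const.sub continuous_id).abs)
  have hgc := int_gc (lam := lam) hσi
  have hgs := int_gs (lam := lam) hσi
  have hsplit : (∫ y : ℝ, Real.sin (2 * lam * |x - y|) * σ y)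
      = (∫ y in Iic x, Real.sin (2 * lam * |x - y|) * σ y)
        + ∫ y in Ioi x, Real.sin (2 * lam * |x - y|) * σ y :=
    (intervalIntegral.integral_Iic_add_Ioi hker.integrableOn hker.integrableOn).symm
  have hIic : (∫ y in Iic x, Real.sin (2 * lam * |x - y|) * σ y)
      = Real.sin (2 * lam * x) * Ac lam σ x - Real.cos (2 * lam * x) * Bs lam σ x := by
    rw [show (∫ y in Iic x, Real.sin (2 * lam * |x - y|) * σ y)
        = ∫ y in Iic x, (Real.sin (2 * lam * x) * (Real.cos (2 * lam * y) * σ y)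
            - Real.cos (2 * lam * x) * (Real.sin (2 * lam * y) * σ y)) from
      setIntegral_congr_fun measurableSet_Iic (fun y hy => by
        rw [abs_of_nonneg (by linarith [mem_Iic.mp hy])]
        rw [show 2 * lam * (x - y) = 2 * lam * x - 2 * lam * y by ring, Real.sin_sub]
        ring)]
    rw [integral_sub ((hgc.integrableOn).const_mul _) ((hgs.integrableOn).const_mul _),
      integral_const_mul _ _, integral_const_mul _ _]
    rfl
  have hIoi : (∫ y in Ioi x, Real.sin (2 * lam * |x - y|) * σ y)
      = Real.cos (2 * lam * x) * (Bt lam σ - Bs lam σ x)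
        - Real.sin (2 * lam * x) * (At lam σ - Ac lam σ x) := by
    have hAc : At lam σ - Ac lam σ x = ∫ y in Ioi x, Real.cos (2 * lam * y) * σ y := by
      have := intervalIntegral.integral_Iic_add_Ioi (b := x) hgc.integrableOn hgc.integrableOn
      unfold At Ac; linarith
    have hBs : Bt lam σ - Bs lam σ x = ∫ y in Ioi x, Real.sin (2 * lam * y) * σ y := by
      have := intervalIntegral.integral_Iic_add_Ioi (b := x) hgs.integrableOn hgs.integrableOn
      unfold Bt Bs; linarith
    rw [show (∫ y in Ioi x, Real.sin (2 * lam * |x - y|) * σ y)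
        = ∫ y in Ioi x, (Real.cos (2 * lam * x) * (Real.sin (2 * lam * y) * σ y)
            - Real.sin (2 * lam * x) * (Real.cos (2 * lam * y) * σ y)) from
      setIntegral_congr_fun measurableSet_Ioi (fun y hy => by
        rw [abs_of_nonpos (by linarith [mem_Ioi.mp hy]), show -(x - y) = y - x by ring]
        rw [show 2 * lam * (y - x) = 2 * lam * y - 2 * lam * x by ring, Real.sin_sub]
        ring)]
    rw [integral_sub ((hgs.integrableOn).const_mul _) ((hgc.integrableOn).const_mul _),
      integral_const_mul _ _, integral_const_mul _ _, hAc, hBs]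
  unfold opT
  rw [hsplit, hIic, hIoi]
  ring

lemma hasDerivAt_Iic_integral {g : ℝ → ℝ} (hgi : Integrable g) (hgc : Continuous g) (x : ℝ) :
    HasDerivAt (fun u => ∫ y in Iic u, g y) (g x) x := by
  have hfun : (fun u => ∫ y in Iic u, g y)
      = fun u => (∫ t in (0:ℝ)..u, g t) + ∫ y in Iic (0:ℝ), g y := by
    funext u
    rw [← intervalIntegral.integral_Iic_sub_Iic hgi.integrableOn hgi.integrableOn]
    ring
  rw [hfun]
  exact (intervalIntegral.integral_hasDerivAt_right (hgi.intervalIntegrable)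
    hgc.aestronglyMeasurable.stronglyMeasurableAtFilter hgc.continuousAt).add_const _

lemma hasDerivAt_Ac {lam : ℝ} {σ : ℝ → ℝ} (hσi : Integrable σ) (hσc : Continuous σ) (x : ℝ) :
    HasDerivAt (Ac lam σ) (Real.cos (2 * lam * x) * σ x) x :=
  hasDerivAt_Iic_integral (int_gc hσi)
    ((Real.continuous_cos.comp (continuous_const.mul continuous_id)).mul hσc) x

lemma hasDerivAt_Bs {lam : ℝ} {σ : ℝ → ℝ} (hσi : Integrable σ) (hσc : Continuous σ) (x : ℝ) :
    HasDerivAt (Bs lam σ) (Real.sin (2 * lam * x) * σ x) x :=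
  hasDerivAt_Iic_integral (int_gs hσi)
    ((Real.continuous_sin.comp (continuous_const.mul continuous_id)).mul hσc) x

lemma hasDerivAt_mul2 (lam x : ℝ) : HasDerivAt (fun u : ℝ => 2 * lam * u) (2 * lam) x := by
  simpa using (hasDerivAt_id x).const_mul (2 * lam)

lemma hasDerivAt_sin2 (lam x : ℝ) :
    HasDerivAt (fun u => Real.sin (2 * lam * u)) (2 * lam * Real.cos (2 * lam * x)) x := by
  refine ((Real.hasDerivAt_sin (2 * lam * x)).comp x (hasDerivAt_mul2 lam x)).congr_deriv ?_
  ring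

lemma hasDerivAt_cos2 (lam x : ℝ) :
    HasDerivAt (fun u => Real.cos (2 * lam * u)) (-(2 * lam * Real.sin (2 * lam * x))) x := by
  refine ((Real.hasDerivAt_cos (2 * lam * x)).comp x (hasDerivAt_mul2 lam x)).congr_deriv ?_
  ring

noncomputable def D1 (lam : ℝ) (σ : ℝ → ℝ) (x : ℝ) : ℝ :=
  (1 / 2) * (Real.cos (2 * lam * x) * (2 * Ac lam σ x - At lam σ)
    - Real.sin (2 * lam * x) * (Bt lam σ - 2 * Bs lam σ x))

lemma hasDerivAt_T {lam : ℝ} (hlam : 0 < lam) {σ : ℝ → ℝ} (hσi : Integrable σ)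
    (hσc : Continuous σ) (x : ℝ) : HasDerivAt (opT lam σ) (D1 lam σ x) x := by
  have hfun : opT lam σ = fun u => (1 / (4 * lam)) *
      (Real.sin (2 * lam * u) * (2 * Ac lam σ u - At lam σ) +
       Real.cos (2 * lam * u) * (Bt lam σ - 2 * Bs lam σ u)) := funext (T_eq hσi)
  rw [hfun]
  have h1 : HasDerivAt (fun u => 2 * Ac lam σ u - At lam σ)
      (2 * (Real.cos (2 * lam * x) * σ x)) x :=
    ((hasDerivAt_Ac hσi hσc x).const_mul 2).sub_const _
  have h2 : HasDerivAt (fun u => Bt lam σ - 2 * Bs lam σ u)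
      (-(2 * (Real.sin (2 * lam * x) * σ x))) x :=
    (((hasDerivAt_Bs hσi hσc x).const_mul 2)).const_sub _
  have := (((hasDerivAt_sin2 lam x).mul h1).add ((hasDerivAt_cos2 lam x).mul h2)).const_mul
    (1 / (4 * lam))
  refine this.congr_deriv ?_
  unfold D1
  field_simp
  ring

lemma hasDerivAt_D1 {lam : ℝ} (hlam : 0 < lam) {σ : ℝ → ℝ} (hσi : Integrable σ)
    (hσc : Continuous σ) (x : ℝ) :
    HasDerivAt (D1 lam σ) (σ x - 4 * lam ^ 2 * opT lam σ x) x := by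
  have h1 : HasDerivAt (fun u => 2 * Ac lam σ u - At lam σ)
      (2 * (Real.cos (2 * lam * x) * σ x)) x :=
    ((hasDerivAt_Ac hσi hσc x).const_mul 2).sub_const _
  have h2 : HasDerivAt (fun u => Bt lam σ - 2 * Bs lam σ u)
      (-(2 * (Real.sin (2 * lam * x) * σ x))) x :=
    (((hasDerivAt_Bs hσi hσc x).const_mul 2)).const_sub _
  have := (((hasDerivAt_cos2 lam x).mul h1).sub ((hasDerivAt_sin2 lam x).mul h2)).const_mul
    (1 / 2 : ℝ)
  have goal : HasDerivAt (D1 lam σ)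
      ((1/2 : ℝ) * ((-(2 * lam * Real.sin (2 * lam * x)) * (2 * Ac lam σ x - At lam σ)
        + Real.cos (2 * lam * x) * (2 * (Real.cos (2 * lam * x) * σ x)))
        - (2 * lam * Real.cos (2 * lam * x) * (Bt lam σ - 2 * Bs lam σ x)
        + Real.sin (2 * lam * x) * (-(2 * (Real.sin (2 * lam * x) * σ x)))))) x := this
  convert goal using 1
  rw [T_eq hσi x]
  have hpy := Real.sin_sq_add_cos_sq (2 * lam * x)
  field_simp
  linear_combination (0 : ℝ) * hpy - σ x * Real.sin_sq_add_cos_sq (lam * 2 * x)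

/-- if `σ` is integrable and continuous and `σ = S[T[σ]] + p` on `ℝ`, then
`δ := T[σ]` is twice continuously differentiable and satisfies
`δ″ + 4λ²·δ − (δ′)²/4 + 4λ²·(exp(δ) − 1 − δ) = p` on `ℝ`. -/
theorem stmt_2 (lam : ℝ) (hlam : 0 < lam) (p : ℝ → ℝ) (hp : Continuous p)
    (σ : ℝ → ℝ) (hσi : Integrable σ) (hσc : Continuous σ)
    (hσ : ∀ x : ℝ, σ x = opS lam (opT lam σ) x + p x) :
    ContDiff ℝ 2 (opT lam σ) ∧
      ∀ x : ℝ,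
        deriv (deriv (opT lam σ)) x + 4 * lam ^ 2 * opT lam σ x
          - (deriv (opT lam σ) x) ^ 2 / 4
          + 4 * lam ^ 2 * (Real.exp (opT lam σ x) - 1 - opT lam σ x) = p x := by
  have hT1 : ∀ x, HasDerivAt (opT lam σ) (D1 lam σ x) x := hasDerivAt_T hlam hσi hσc
  have hD1' : deriv (opT lam σ) = D1 lam σ := funext fun x => (hT1 x).deriv
  have hδdiff : Differentiable ℝ (opT lam σ) := fun x => (hT1 x).differentiableAt
  have hD1diff : Differentiable ℝ (D1 lam σ) :=
    fun x => (hasDerivAt_D1 hlam hσi hσc x).differentiableAt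
  have hderivD1 : deriv (D1 lam σ) = fun x => σ x - 4 * lam ^ 2 * opT lam σ x :=
    funext fun x => (hasDerivAt_D1 hlam hσi hσc x).deriv
  have hT2 : ∀ x, deriv (deriv (opT lam σ)) x = σ x - 4 * lam ^ 2 * opT lam σ x := by
    intro x; rw [hD1', hderivD1]
  constructor
  · rw [show (2 : WithTop ℕ∞) = 1 + 1 by norm_num, contDiff_succ_iff_deriv]
    refine ⟨hδdiff, by simp, ?_⟩
    rw [hD1', contDiff_one_iff_deriv]
    exact ⟨hD1diff, by rw [hderivD1]; exact hσc.sub (continuous_const.mul hδdiff.continuous)⟩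
  · intro x
    have h2 := hT2 x
    have h3 := hσ x
    simp only [opS] at h3
    linarith
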